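/- Let λ₁, λ₂, λ₃ be real numbers with λ₁ + λ₂ + λ₃ = 0. Then 3√6 · |λ₁λ₂λ₃| = (λ₁² + λ₂² + λ₃²)^{3/2} holds if and only if at least two of λ₁, λ₂, λ₃ are equal (i.e., the set {λ₁, λ₂, λ₃} has at most two distinct elements). -/
import Mathlib


/-- Equality case of the algebraic inequality `3√6 |λ₁λ₂λ₃| ≤ (λ₁² + λ₂² + λ₃²)^(3/2)`
for trace-free triples: equality holds iff at least two of the `λᵢ` coincide. -/
theorem tracefree_det_equality_iff (l1 l2 l3 : ℝ) (hsum : l1 + l2 + l3 = 0) :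
    3 * Real.sqrt 6 * |l1 * l2 * l3| = (l1 ^ 2 + l2 ^ 2 + l3 ^ 2) ^ ((3 : ℝ) / 2) ↔
      (l1 = l2 ∨ l1 = l3 ∨ l2 = l3) := by
  set s : ℝ := l1 ^ 2 + l2 ^ 2 + l3 ^ 2 with hs
  have hs0 : 0 ≤ s := by positivity
  have hrhs : s ^ ((3 : ℝ) / 2) = Real.sqrt (s ^ 3) := by
    rw [show ((3 : ℝ) / 2) = (3 : ℕ) * (1 / 2 : ℝ) by norm_num,
      Real.rpow_natCast_mul hs0, ← Real.sqrt_eq_rpow]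
  have hlhs : 3 * Real.sqrt 6 * |l1 * l2 * l3| =
      Real.sqrt (54 * (l1 * l2 * l3) ^ 2) := by
    rw [show (54 : ℝ) * (l1 * l2 * l3) ^ 2 = 9 * (6 * (l1 * l2 * l3) ^ 2) by ring,
      Real.sqrt_mul (by norm_num), Real.sqrt_mul (by norm_num),
      Real.sqrt_sq_eq_abs, show (9:ℝ) = 3 ^ 2 by norm_num,
      Real.sqrt_sq (by norm_num : (0:ℝ) ≤ 3)]
    ring
  rw [hrhs, hlhs]
  have key : s ^ 3 - 54 * (l1 * l2 * l3) ^ 2 =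
      2 * ((l1 - l2) * (l2 - l3) * (l3 - l1)) ^ 2 := by
    have h3 : l3 = -l1 - l2 := by linarith
    subst h3; rw [hs]; ring
  constructor
  · intro h
    have heq : 54 * (l1 * l2 * l3) ^ 2 = s ^ 3 := by
      exact (Real.sqrt_inj (by positivity) (by positivity)).mp h
    have hD : ((l1 - l2) * (l2 - l3) * (l3 - l1)) ^ 2 = 0 := by nlinarith [key]
    have hD0 : (l1 - l2) * (l2 - l3) * (l3 - l1) = 0 := by
      exact pow_eq_zero_iff (n := 2) (by norm_num) |>.mp hD
    rcases mul_eq_zero.mp hD0 with h | h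
    · rcases mul_eq_zero.mp h with h | h
      · left; linarith
      · right; right; linarith
    · right; left; linarith
  · intro h
    have hD0 : (l1 - l2) * (l2 - l3) * (l3 - l1) = 0 := by
      rcases h with h | h | h <;> rw [h] <;> ring
    have heq : 54 * (l1 * l2 * l3) ^ 2 = s ^ 3 := by
      nlinarith [key, hD0]
    rw [heq]
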